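/- Let 𝒜 be the family of compact subintervals of [a,b] ⊆ ℝ, let ν([c,d]) = d - c, and let μ : 𝒜 → ℝ be additive over interval decompositions (μ([c,e]) = μ([c,d]) + μ([d,e]) for c ≤ d ≤ e). Suppose g : [a,b] → ℝ is the strict derivative of μ with respect to ν on [a,b]: for every x ∈ [a,b] and ε > 0 there is δ > 0 such that |μ(I)/ν(I) - g(x)| < ε for all nondegenerate intervals I ∈ 𝒜 with I ⊆ (x-δ, x+δ). Then for every nondegenerate interval I ⊆ [a,b], (inf over [a,b] of g) ≤ μ(I)/ν(I) ≤ (sup over [a,b] of g). -/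
import Mathlib


/-- `μ c d` is the value of the set function on the interval `[c,d]`;
interval-additivity: `μ [c,e] = μ [c,d] + μ [d,e]` for `c ≤ d ≤ e` in `[a,b]`. -/
def IntervalAdditive (a b : ℝ) (μ : ℝ → ℝ → ℝ) : Prop :=
  ∀ c d e : ℝ, a ≤ c → c ≤ d → d ≤ e → e ≤ b → μ c e = μ c d + μ d e

/-- `g` is the Peano strict derivative of the interval function `μ` with respect
to length on `[a,b]`: for every `x ∈ [a,b]` and `ε > 0` there is `δ > 0` with
`|μ [c,d] / (d - c) - g x| < ε` for every nondegenerate interval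
`[c,d] ⊆ (x - δ, x + δ) ∩ [a,b]`. -/
def PeanoStrictDeriv (a b : ℝ) (μ : ℝ → ℝ → ℝ) (g : ℝ → ℝ) : Prop :=
  ∀ x ∈ Set.Icc a b, ∀ ε > 0, ∃ δ > 0, ∀ c d : ℝ, a ≤ c → c < d → d ≤ b →
    Set.Icc c d ⊆ Set.Ioo (x - δ) (x + δ) → |μ c d / (d - c) - g x| < ε

/-- The strict derivative is continuous on `[a,b]` (when `a < b`). -/
lemma peano_deriv_continuousOn (a b : ℝ) (hab : a < b) (μ : ℝ → ℝ → ℝ) (g : ℝ → ℝ)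
    (hg : PeanoStrictDeriv a b μ g) : ContinuousOn g (Set.Icc a b) := by
  rw [Metric.continuousOn_iff]
  intro x hx ε hε
  obtain ⟨δ, hδpos, hδ⟩ := hg x hx (ε / 2) (by linarith)
  refine ⟨δ / 2, by linarith, fun y hy hyx => ?_⟩
  obtain ⟨δ', hδ'pos, hδ'⟩ := hg y hy (ε / 2) (by linarith)
  set η := min (δ / 2) δ' with hη
  have hηpos : 0 < η := lt_min (by linarith) hδ'pos
  have hη1 : η ≤ δ / 2 := min_le_left _ _
  have hη2 : η ≤ δ' := min_le_right _ _
  set c' := max a (y - η / 2) with hc'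
  set d' := min b (y + η / 2) with hd'
  have hya : a ≤ y := hy.1
  have hyb : y ≤ b := hy.2
  have hcd : c' < d' := max_lt (lt_min hab (by linarith)) (lt_min (by linarith) (by linarith))
  have hac : a ≤ c' := le_max_left _ _
  have hdb : d' ≤ b := min_le_left _ _
  have hyx' : |y - x| < δ / 2 := by rwa [Real.dist_eq] at hyx
  have hyx1 : y - x < δ / 2 := (abs_lt.mp hyx').2
  have hyx2 : -(δ / 2) < y - x := (abs_lt.mp hyx').1
  have hsubx : Set.Icc c' d' ⊆ Set.Ioo (x - δ) (x + δ) := by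
    intro t ht
    have h1 : y - η / 2 ≤ t := le_trans (le_max_right _ _) ht.1
    have h2 : t ≤ y + η / 2 := le_trans ht.2 (min_le_right _ _)
    constructor <;> nlinarith
  have hsuby : Set.Icc c' d' ⊆ Set.Ioo (y - δ') (y + δ') := by
    intro t ht
    have h1 : y - η / 2 ≤ t := le_trans (le_max_right _ _) ht.1
    have h2 : t ≤ y + η / 2 := le_trans ht.2 (min_le_right _ _)
    constructor <;> nlinarith
  have hA := hδ c' d' hac hcd hdb hsubx
  have hB := hδ' c' d' hac hcd hdb hsuby
  rw [Real.dist_eq]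
  have h1 := abs_lt.mp hA
  have h2 := abs_lt.mp hB
  rw [abs_lt]
  constructor <;> [nlinarith [h1.1, h1.2, h2.1, h2.2]; nlinarith [h1.1, h1.2, h2.1, h2.2]]

/-- Peano's Theorem 13 (1887): the average `μ(I)/ν(I)` is bounded between the
infimum and the supremum of the strict derivative `g` over `[a,b]`. -/
theorem peano_mean_value_inequality (a b : ℝ) (μ : ℝ → ℝ → ℝ) (g : ℝ → ℝ)
    (hμ : IntervalAdditive a b μ) (hg : PeanoStrictDeriv a b μ g) :
    ∀ c d : ℝ, a ≤ c → c < d → d ≤ b →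
      sInf (g '' Set.Icc a b) ≤ μ c d / (d - c) ∧
        μ c d / (d - c) ≤ sSup (g '' Set.Icc a b) := by
  intro c d hac hcd hdb
  have hab : a < b := lt_of_le_of_lt hac (lt_of_lt_of_le hcd hdb)
  have hcb : c ≤ b := le_trans hcd.le hdb
  have had : a ≤ d := le_trans hac hcd.le
  -- μ of degenerate intervals vanishes
  have hzero : μ c c = 0 := by
    have := hμ c c c hac le_rfl le_rfl hcb
    linarith
  -- the point function f t = μ c t
  set f : ℝ → ℝ := fun t => μ c t with hf
  -- f has derivative g x within [c,d] at each x ∈ [c,d]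
  have hderiv : ∀ x ∈ Set.Icc c d, HasDerivWithinAt f (g x) (Set.Icc c d) x := by
    intro x hx
    have hxab : x ∈ Set.Icc a b := ⟨le_trans hac hx.1, le_trans hx.2 hdb⟩
    rw [hasDerivWithinAt_iff_tendsto_slope]
    rw [Metric.tendsto_nhdsWithin_nhds]
    intro ε hε
    obtain ⟨δ, hδpos, hδ⟩ := hg x hxab ε hε
    refine ⟨δ, hδpos, fun t ht hdist => ?_⟩
    obtain ⟨htcd, htx⟩ := ht
    have htx' : t ≠ x := htx
    rw [Real.dist_eq] at hdist ⊢
    rcases lt_or_gt_of_ne htx' with hlt | hgt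
    · -- t < x
      have hadd : μ c x = μ c t + μ t x :=
        hμ c t x hac htcd.1 hlt.le (le_trans (le_trans hx.2 hdb) le_rfl)
      have hslope : slope f x t = μ t x / (x - t) := by
        rw [slope_def_field, div_eq_div_iff (by linarith) (by linarith)]
        simp only [hf]
        ring_nf
        nlinarith [hadd]
      rw [hslope]
      refine hδ t x (le_trans hac htcd.1) hlt (le_trans hx.2 hdb) ?_
      intro s hs
      have h1 : t ≤ s := hs.1
      have h2 : s ≤ x := hs.2
      have : |t - x| < δ := hdist
      have := abs_lt.mp this
      constructor <;> linarith [this.1, this.2]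
    · -- x < t
      have hadd : μ c t = μ c x + μ x t :=
        hμ c x t hac hx.1 hgt.le (le_trans htcd.2 hdb)
      have hslope : slope f x t = μ x t / (t - x) := by
        rw [slope_def_field]
        simp only [hf]
        rw [hadd]
        ring_nf
      rw [hslope]
      refine hδ x t hxab.1 hgt (le_trans htcd.2 hdb) ?_
      intro s hs
      have h1 : x ≤ s := hs.1
      have h2 : s ≤ t := hs.2
      have : |t - x| < δ := hdist
      have := abs_lt.mp this
      constructor <;> linarith [this.1, this.2]
  -- continuity of f on [c,d]
  have hfc : ContinuousOn f (Set.Icc c d) := fun x hx => (hderiv x hx).continuousWithinAt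
  -- interior of [c,d]
  have hint : interior (Set.Icc c d) = Set.Ioo c d := interior_Icc
  -- differentiability + deriv identification on the interior
  have hderiv' : ∀ x ∈ Set.Ioo c d, HasDerivAt f (g x) x := by
    intro x hx
    have hmem : Set.Icc c d ∈ nhds x :=
      mem_nhds_iff.mpr ⟨Set.Ioo c d, Set.Ioo_subset_Icc_self, isOpen_Ioo, hx⟩
    exact (hderiv x (Set.Ioo_subset_Icc_self hx)).hasDerivAt hmem
  have hdiff : DifferentiableOn ℝ f (interior (Set.Icc c d)) := by
    rw [hint]
    exact fun x hx => ((hderiv' x hx).differentiableAt).differentiableWithinAt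
  have hderiveq : ∀ x ∈ Set.Ioo c d, deriv f x = g x := fun x hx => (hderiv' x hx).deriv
  -- boundedness of g on [a,b]
  have hgc : ContinuousOn g (Set.Icc a b) := peano_deriv_continuousOn a b hab μ g hg
  have hcompact : IsCompact (g '' Set.Icc a b) := isCompact_Icc.image_of_continuousOn hgc
  have hbdd_below : BddBelow (g '' Set.Icc a b) := hcompact.bddBelow
  have hbdd_above : BddAbove (g '' Set.Icc a b) := hcompact.bddAbove
  have hmemab : ∀ x ∈ Set.Ioo c d, x ∈ Set.Icc a b := fun x hx =>
    ⟨le_trans hac hx.1.le, le_trans hx.2.le hdb⟩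
  have hfd : f d - f c = μ c d := by simp [hf, hzero]
  have hdc : (0:ℝ) < d - c := by linarith
  constructor
  · -- lower bound
    have hbound : ∀ x ∈ interior (Set.Icc c d), sInf (g '' Set.Icc a b) ≤ deriv f x := by
      rw [hint]
      intro x hx
      rw [hderiveq x hx]
      exact csInf_le hbdd_below ⟨x, hmemab x hx, rfl⟩
    have := (convex_Icc c d).mul_sub_le_image_sub_of_le_deriv hfc hdiff hbound c
      (Set.left_mem_Icc.mpr hcd.le) d (Set.right_mem_Icc.mpr hcd.le) hcd.le
    rw [hfd] at this
    rw [le_div_iff₀ hdc]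
    linarith
  · -- upper bound
    have hbound : ∀ x ∈ interior (Set.Icc c d), deriv f x ≤ sSup (g '' Set.Icc a b) := by
      rw [hint]
      intro x hx
      rw [hderiveq x hx]
      exact le_csSup hbdd_above ⟨x, hmemab x hx, rfl⟩
    have := (convex_Icc c d).image_sub_le_mul_sub_of_deriv_le hfc hdiff hbound c
      (Set.left_mem_Icc.mpr hcd.le) d (Set.right_mem_Icc.mpr hcd.le) hcd.le
    rw [hfd] at this
    rw [div_le_iff₀ hdc]
    linarith
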